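/- arXiv:2107.02853 — 2 statements merged into one kernel-verified Lean document; each statement's English description precedes it below -/
import Mathlib

section
/- For every eccentricity e with 0 ≤ e < 1, the average over one period of (1−e cos u)^{−7} satisfies (1/2π) ∫₀^{2π} (1 − e cos u)^{−7} du = (1 + (15/2)e² + (45/8)e⁴ + (5/16)e⁶) / (1−e²)^{13/2}. -/
open Real

set_option maxHeartbeats 4000000

private lemma hD1 (e : ℝ) (u : ℝ)
    (hd : ∀ u : ℝ, 0 < 1 - e * Real.cos u) :
    HasDerivAt (fun x : ℝ => e * Real.sin x * ((1 - e*Real.cos x)^1)⁻¹)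
      ((1:ℝ)*(1-e^2)*((1 - e*Real.cos u)^2)⁻¹ - 1*((1 - e*Real.cos u)^1)⁻¹) u := by
  have hdu : HasDerivAt (fun x : ℝ => 1 - e * Real.cos x) (e * Real.sin u) u := by
    have h := ((Real.hasDerivAt_cos u).const_mul e).const_sub 1
    refine h.congr_deriv ?_
    ring
  have hsin : HasDerivAt (fun x : ℝ => e * Real.sin x) (e * Real.cos u) u :=
    (Real.hasDerivAt_sin u).const_mul e
  have h := hsin.mul ((hdu.pow 1).inv (pow_ne_zero 1 (hd u).ne'))
  refine h.congr_deriv ?_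
  have hdne : (1 - e * Real.cos u) ≠ 0 := (hd u).ne'
  have hS : Real.sin u ^ 2 = 1 - Real.cos u ^ 2 := by
    nlinarith [Real.sin_sq_add_cos_sq u]
  simp only [Pi.inv_apply, Pi.pow_apply]
  field_simp
  ring_nf
  rw [hS]
  ring

private lemma hD2 (e : ℝ) (u : ℝ)
    (hd : ∀ u : ℝ, 0 < 1 - e * Real.cos u) :
    HasDerivAt (fun x : ℝ => e * Real.sin x * ((1 - e*Real.cos x)^2)⁻¹)
      ((2:ℝ)*(1-e^2)*((1 - e*Real.cos u)^3)⁻¹ - 3*((1 - e*Real.cos u)^2)⁻¹ + 1*((1 - e*Real.cos u)^1)⁻¹) u := by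
  have hdu : HasDerivAt (fun x : ℝ => 1 - e * Real.cos x) (e * Real.sin u) u := by
    have h := ((Real.hasDerivAt_cos u).const_mul e).const_sub 1
    refine h.congr_deriv ?_
    ring
  have hsin : HasDerivAt (fun x : ℝ => e * Real.sin x) (e * Real.cos u) u :=
    (Real.hasDerivAt_sin u).const_mul e
  have h := hsin.mul ((hdu.pow 2).inv (pow_ne_zero 2 (hd u).ne'))
  refine h.congr_deriv ?_
  have hdne : (1 - e * Real.cos u) ≠ 0 := (hd u).ne'
  have hS : Real.sin u ^ 2 = 1 - Real.cos u ^ 2 := by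
    nlinarith [Real.sin_sq_add_cos_sq u]
  simp only [Pi.inv_apply, Pi.pow_apply]
  field_simp
  ring_nf
  rw [hS]
  ring

private lemma hD3 (e : ℝ) (u : ℝ)
    (hd : ∀ u : ℝ, 0 < 1 - e * Real.cos u) :
    HasDerivAt (fun x : ℝ => e * Real.sin x * ((1 - e*Real.cos x)^3)⁻¹)
      ((3:ℝ)*(1-e^2)*((1 - e*Real.cos u)^4)⁻¹ - 5*((1 - e*Real.cos u)^3)⁻¹ + 2*((1 - e*Real.cos u)^2)⁻¹) u := by
  have hdu : HasDerivAt (fun x : ℝ => 1 - e * Real.cos x) (e * Real.sin u) u := by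
    have h := ((Real.hasDerivAt_cos u).const_mul e).const_sub 1
    refine h.congr_deriv ?_
    ring
  have hsin : HasDerivAt (fun x : ℝ => e * Real.sin x) (e * Real.cos u) u :=
    (Real.hasDerivAt_sin u).const_mul e
  have h := hsin.mul ((hdu.pow 3).inv (pow_ne_zero 3 (hd u).ne'))
  refine h.congr_deriv ?_
  have hdne : (1 - e * Real.cos u) ≠ 0 := (hd u).ne'
  have hS : Real.sin u ^ 2 = 1 - Real.cos u ^ 2 := by
    nlinarith [Real.sin_sq_add_cos_sq u]
  simp only [Pi.inv_apply, Pi.pow_apply]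
  field_simp
  ring_nf
  rw [hS]
  ring

private lemma hD4 (e : ℝ) (u : ℝ)
    (hd : ∀ u : ℝ, 0 < 1 - e * Real.cos u) :
    HasDerivAt (fun x : ℝ => e * Real.sin x * ((1 - e*Real.cos x)^4)⁻¹)
      ((4:ℝ)*(1-e^2)*((1 - e*Real.cos u)^5)⁻¹ - 7*((1 - e*Real.cos u)^4)⁻¹ + 3*((1 - e*Real.cos u)^3)⁻¹) u := by
  have hdu : HasDerivAt (fun x : ℝ => 1 - e * Real.cos x) (e * Real.sin u) u := by
    have h := ((Real.hasDerivAt_cos u).const_mul e).const_sub 1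
    refine h.congr_deriv ?_
    ring
  have hsin : HasDerivAt (fun x : ℝ => e * Real.sin x) (e * Real.cos u) u :=
    (Real.hasDerivAt_sin u).const_mul e
  have h := hsin.mul ((hdu.pow 4).inv (pow_ne_zero 4 (hd u).ne'))
  refine h.congr_deriv ?_
  have hdne : (1 - e * Real.cos u) ≠ 0 := (hd u).ne'
  have hS : Real.sin u ^ 2 = 1 - Real.cos u ^ 2 := by
    nlinarith [Real.sin_sq_add_cos_sq u]
  simp only [Pi.inv_apply, Pi.pow_apply]
  field_simp
  ring_nf
  rw [hS]
  ring

private lemma hD5 (e : ℝ) (u : ℝ)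
    (hd : ∀ u : ℝ, 0 < 1 - e * Real.cos u) :
    HasDerivAt (fun x : ℝ => e * Real.sin x * ((1 - e*Real.cos x)^5)⁻¹)
      ((5:ℝ)*(1-e^2)*((1 - e*Real.cos u)^6)⁻¹ - 9*((1 - e*Real.cos u)^5)⁻¹ + 4*((1 - e*Real.cos u)^4)⁻¹) u := by
  have hdu : HasDerivAt (fun x : ℝ => 1 - e * Real.cos x) (e * Real.sin u) u := by
    have h := ((Real.hasDerivAt_cos u).const_mul e).const_sub 1
    refine h.congr_deriv ?_
    ring
  have hsin : HasDerivAt (fun x : ℝ => e * Real.sin x) (e * Real.cos u) u :=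
    (Real.hasDerivAt_sin u).const_mul e
  have h := hsin.mul ((hdu.pow 5).inv (pow_ne_zero 5 (hd u).ne'))
  refine h.congr_deriv ?_
  have hdne : (1 - e * Real.cos u) ≠ 0 := (hd u).ne'
  have hS : Real.sin u ^ 2 = 1 - Real.cos u ^ 2 := by
    nlinarith [Real.sin_sq_add_cos_sq u]
  simp only [Pi.inv_apply, Pi.pow_apply]
  field_simp
  ring_nf
  rw [hS]
  ring

private lemma hD6 (e : ℝ) (u : ℝ)
    (hd : ∀ u : ℝ, 0 < 1 - e * Real.cos u) :
    HasDerivAt (fun x : ℝ => e * Real.sin x * ((1 - e*Real.cos x)^6)⁻¹)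
      ((6:ℝ)*(1-e^2)*((1 - e*Real.cos u)^7)⁻¹ - 11*((1 - e*Real.cos u)^6)⁻¹ + 5*((1 - e*Real.cos u)^5)⁻¹) u := by
  have hdu : HasDerivAt (fun x : ℝ => 1 - e * Real.cos x) (e * Real.sin u) u := by
    have h := ((Real.hasDerivAt_cos u).const_mul e).const_sub 1
    refine h.congr_deriv ?_
    ring
  have hsin : HasDerivAt (fun x : ℝ => e * Real.sin x) (e * Real.cos u) u :=
    (Real.hasDerivAt_sin u).const_mul e
  have h := hsin.mul ((hdu.pow 6).inv (pow_ne_zero 6 (hd u).ne'))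
  refine h.congr_deriv ?_
  have hdne : (1 - e * Real.cos u) ≠ 0 := (hd u).ne'
  have hS : Real.sin u ^ 2 = 1 - Real.cos u ^ 2 := by
    nlinarith [Real.sin_sq_add_cos_sq u]
  simp only [Pi.inv_apply, Pi.pow_apply]
  field_simp
  ring_nf
  rw [hS]
  ring


private lemma hasDerivAt_H (e c : ℝ) (u : ℝ) (he2 : (0:ℝ) < 1 - e ^ 2)
    (hd : ∀ u : ℝ, 0 < 1 - e * Real.cos u)
    (hc : c = (1 + 15/2*e^2 + 45/8*e^4 + 5/16*e^6) / (1 - e^2)^6) :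
    HasDerivAt (fun x : ℝ =>
      ((49/20 + 91/10*e^2 + 231/80*e^4)/(1-e^2)^6) * (e * Real.sin x * ((1 - e*Real.cos x)^1)⁻¹) +
      ((29/20 + 61/20*e^2 + 5/16*e^4)/(1-e^2)^5) * (e * Real.sin x * ((1 - e*Real.cos x)^2)⁻¹) +
      ((19/20 + 39/40*e^2)/(1-e^2)^4) * (e * Real.sin x * ((1 - e*Real.cos x)^3)⁻¹) +
      ((37/60 + 5/24*e^2)/(1-e^2)^3) * (e * Real.sin x * ((1 - e*Real.cos x)^4)⁻¹) +
      ((11/30)/(1-e^2)^2) * (e * Real.sin x * ((1 - e*Real.cos x)^5)⁻¹) +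
      ((1/6)/(1-e^2)) * (e * Real.sin x * ((1 - e*Real.cos x)^6)⁻¹))
      (((1 - e * Real.cos u) ^ 7)⁻¹ - c * (1 - e * Real.cos u)⁻¹) u := by
  have T1 := (hD1 e u hd).const_mul ((49/20 + 91/10*e^2 + 231/80*e^4)/(1-e^2)^6)
  have T2 := (hD2 e u hd).const_mul ((29/20 + 61/20*e^2 + 5/16*e^4)/(1-e^2)^5)
  have T3 := (hD3 e u hd).const_mul ((19/20 + 39/40*e^2)/(1-e^2)^4)
  have T4 := (hD4 e u hd).const_mul ((37/60 + 5/24*e^2)/(1-e^2)^3)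
  have T5 := (hD5 e u hd).const_mul ((11/30)/(1-e^2)^2)
  have T6 := (hD6 e u hd).const_mul ((1/6)/(1-e^2))
  refine (((((T1.add T2).add T3).add T4).add T5).add T6).congr_deriv ?_
  have hdne : (1 - e * Real.cos u) ≠ 0 := (hd u).ne'
  have he2' : ((1:ℝ) - e^2) ≠ 0 := he2.ne'
  subst hc
  generalize hdq : (1 - e * Real.cos u) = d at hdne ⊢
  field_simp
  ring

private lemma hasDerivAt_arc (e s β : ℝ) (u : ℝ) (hs : 0 < s)
    (hs2 : s ^ 2 = 1 - e ^ 2) (hβ : β = e / (1 + s)) (h0 : 0 ≤ e) (h1 : e < 1)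
    (hd : ∀ u : ℝ, 0 < 1 - e * Real.cos u)
    (hbd : ∀ u : ℝ, 0 < 1 - β * Real.cos u) :
    HasDerivAt
      (fun x : ℝ => x + 2 * Real.arctan (β * Real.sin x / (1 - β * Real.cos x)))
      (s * ((1 - e * Real.cos u))⁻¹) u := by
  have hs1 : (0:ℝ) < 1 + s := by linarith
  have hβ0 : 0 ≤ β := by rw [hβ]; positivity
  have hβ1 : β < 1 := by rw [hβ, div_lt_one hs1]; linarith
  have hne2 : (1:ℝ) + β ^ 2 ≠ 0 := by positivity
  have he : e = 2 * β / (1 + β ^ 2) := by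
    subst hβ
    field_simp
    linear_combination e * hs2
  have hss : s = (1 - β ^ 2) / (1 + β ^ 2) := by
    subst hβ
    field_simp
    linear_combination (s + 1) * hs2
  have hdβu : HasDerivAt (fun x : ℝ => 1 - β * Real.cos x) (β * Real.sin u) u := by
    have h := ((Real.hasDerivAt_cos u).const_mul β).const_sub 1
    refine h.congr_deriv ?_
    ring
  have hnum : HasDerivAt (fun x : ℝ => β * Real.sin x) (β * Real.cos u) u :=
    (Real.hasDerivAt_sin u).const_mul β
  have hq := hnum.div hdβu (hbd u).ne'
  have hid : HasDerivAt (fun x : ℝ => x) 1 u := hasDerivAt_id u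
  have h := hid.add ((hq.arctan).const_mul 2)
  refine h.congr_deriv ?_
  have hbne : (1 - β * Real.cos u) ≠ 0 := (hbd u).ne'
  have hq2 : (0:ℝ) < 1 + β ^ 2 - 2 * β * Real.cos u := by
    nlinarith [Real.cos_le_one u, sq_nonneg (1 - β)]
  have hkey : s * (1 - e * Real.cos u)⁻¹
      = (1 - β ^ 2) / (1 + β ^ 2) * (1 - 2 * β / (1 + β ^ 2) * Real.cos u)⁻¹ := by
    rw [← he, ← hss]
  have hb2 : (1:ℝ) - 2 * β / (1 + β ^ 2) * Real.cos u
      = (1 + β ^ 2 - 2 * β * Real.cos u) / (1 + β ^ 2) := by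
    field_simp
  have hS : Real.sin u ^ 2 = 1 - Real.cos u ^ 2 := by
    nlinarith [Real.sin_sq_add_cos_sq u]
  rw [hkey, hb2]
  have h1q : (0:ℝ) < 1 + (β * Real.sin u / (1 - β * Real.cos u)) ^ 2 := by positivity
  simp only [Pi.div_apply]
  field_simp
  ring_nf
  rw [hS]
  ring

private lemma integral_pow7 (e s β : ℝ) (h0 : 0 ≤ e) (h1 : e < 1)
    (hs : 0 < s) (hs2 : s ^ 2 = 1 - e ^ 2) (hβ : β = e / (1 + s)) :
    ∫ u in (0:ℝ)..(2 * π), ((1 - e * Real.cos u) ^ 7)⁻¹ =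
      (1 + 15/2*e^2 + 45/8*e^4 + 5/16*e^6) / (1 - e^2)^6 / s * (2 * π) := by
  have he2 : (0:ℝ) < 1 - e ^ 2 := by nlinarith
  have hs1 : (0:ℝ) < 1 + s := by linarith
  have hβ0 : 0 ≤ β := by rw [hβ]; positivity
  have hβ1 : β < 1 := by rw [hβ, div_lt_one hs1]; linarith
  have hd : ∀ u : ℝ, 0 < 1 - e * Real.cos u := by
    intro u
    nlinarith [Real.cos_le_one u, Real.neg_one_le_cos u]
  have hbd : ∀ u : ℝ, 0 < 1 - β * Real.cos u := by
    intro u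
    nlinarith [Real.cos_le_one u, Real.neg_one_le_cos u]
  set c : ℝ := (1 + 15/2*e^2 + 45/8*e^4 + 5/16*e^6) / (1 - e^2)^6 with hc
  have hder : ∀ u ∈ Set.uIcc (0:ℝ) (2 * π), HasDerivAt (fun x : ℝ =>
      ((49/20 + 91/10*e^2 + 231/80*e^4)/(1-e^2)^6) * (e * Real.sin x * ((1 - e*Real.cos x)^1)⁻¹) +
      ((29/20 + 61/20*e^2 + 5/16*e^4)/(1-e^2)^5) * (e * Real.sin x * ((1 - e*Real.cos x)^2)⁻¹) +
      ((19/20 + 39/40*e^2)/(1-e^2)^4) * (e * Real.sin x * ((1 - e*Real.cos x)^3)⁻¹) +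
      ((37/60 + 5/24*e^2)/(1-e^2)^3) * (e * Real.sin x * ((1 - e*Real.cos x)^4)⁻¹) +
      ((11/30)/(1-e^2)^2) * (e * Real.sin x * ((1 - e*Real.cos x)^5)⁻¹) +
      ((1/6)/(1-e^2)) * (e * Real.sin x * ((1 - e*Real.cos x)^6)⁻¹)
      + c / s * (x + 2 * Real.arctan (β * Real.sin x / (1 - β * Real.cos x))))
      (((1 - e * Real.cos u) ^ 7)⁻¹) u := by
    intro u _
    have hH := hasDerivAt_H e c u he2 hd hc
    have hA := hasDerivAt_arc e s β u hs hs2 hβ h0 h1 hd hbd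
    refine HasDerivAt.congr_deriv (hH.add (hA.const_mul (c / s))) ?_
    have h1 := (hd u).ne'
    field_simp
    ring
  have hint : IntervalIntegrable (fun u => ((1 - e * Real.cos u) ^ 7)⁻¹)
      MeasureTheory.volume 0 (2 * π) := by
    apply Continuous.intervalIntegrable
    exact ((continuous_const.sub (continuous_const.mul Real.continuous_cos)).pow 7).inv₀
      (fun u => pow_ne_zero 7 (hd u).ne')
  rw [intervalIntegral.integral_eq_sub_of_hasDerivAt hder hint]
  simp [Real.sin_two_pi, Real.cos_two_pi, Real.arctan_zero]

/-- The orbital average of `(1 - e cos u)⁻⁷` in the dissipative spin-orbit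
problem: for `0 ≤ e < 1`,
`(1/2π) ∫₀^{2π} (1 - e cos u)⁻⁷ du
  = (1 + (15/2)e² + (45/8)e⁴ + (5/16)e⁶)/(1-e²)^{13/2}`. -/
theorem average_Nbar (e : ℝ) (h0 : 0 ≤ e) (h1 : e < 1) :
    (1 / (2 * π)) * ∫ u in (0:ℝ)..(2 * π), ((1 - e * Real.cos u) ^ 7)⁻¹ =
      (1 + (15 / 2) * e ^ 2 + (45 / 8) * e ^ 4 + (5 / 16) * e ^ 6) /
        (1 - e ^ 2) ^ ((13 : ℝ) / 2) := by
  have he2 : (0:ℝ) < 1 - e ^ 2 := by nlinarith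
  have hs : 0 < Real.sqrt (1 - e ^ 2) := Real.sqrt_pos.mpr he2
  have hs2 : Real.sqrt (1 - e ^ 2) ^ 2 = 1 - e ^ 2 := Real.sq_sqrt he2.le
  have h2π : (2 * π) ≠ 0 := by positivity
  rw [integral_pow7 e (Real.sqrt (1 - e ^ 2)) (e / (1 + Real.sqrt (1 - e ^ 2))) h0 h1 hs hs2 rfl]
  have h13 : (1 - e ^ 2) ^ ((13:ℝ)/2) = (1 - e ^ 2) ^ 6 * Real.sqrt (1 - e ^ 2) := by
    rw [show ((13:ℝ)/2) = (6:ℕ) + (1/2:ℝ) by norm_num, Real.rpow_add he2,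
      Real.rpow_natCast, ← Real.sqrt_eq_rpow]
  rw [h13, mul_comm (1/(2*π)), mul_one_div, mul_div_cancel_right₀ _ h2π, div_div]
end

section
/- Automatic reducibility for exact invariant tori: let λ ∈ ℝ, let f: ℝ² → ℝ² be C¹ and conformally symplectic with constant factor λ, i.e. Df(z)ᵀ J Df(z) = λ J for all z, let ω ∈ ℝ, and let K: ℝ → ℝ² be C¹ with DK(θ) ≠ 0 for all θ, satisfying the exact invariance equation f(K(θ)) = K(θ+ω) for all θ. Define N(θ) = (DK(θ)ᵀDK(θ))^{−1}, V(θ) = J^{−1} DK(θ) N(θ), M(θ) = [DK(θ) | V(θ)], and S(θ) = (DK(θ+ω) N(θ+ω))ᵀ · Df(K(θ)) · J^{−1} DK(θ) N(θ). Then for every θ: Df(K(θ)) · M(θ) = M(θ+ω) · [[1, S(θ)],[0, λ]]; equivalently, Df(K(θ)) DK(θ) = DK(θ+ω) and Df(K(θ)) V(θ) = DK(θ+ω) S(θ) + λ V(θ+ω). -/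
open Matrix

noncomputable section

/-- The standard symplectic matrix `J = [[0,1],[-1,0]]` on `ℝ²`. -/
def J2 : Matrix (Fin 2) (Fin 2) ℝ := !![0, 1; -1, 0]

/-- The Jacobian matrix of a map `f : ℝ² → ℝ²` at a point `z`. -/
def jac (f : (Fin 2 → ℝ) → Fin 2 → ℝ) (z : Fin 2 → ℝ) : Matrix (Fin 2) (Fin 2) ℝ :=
  Matrix.of fun i j => fderiv ℝ f z (Pi.single j 1) i

lemma J2_inv : J2⁻¹ = !![0,-1;1,0] := by
  apply Matrix.inv_eq_right_inv
  simp [J2]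
  ext i j; fin_cases i <;> fin_cases j <;> simp

lemma jac_mulVec (f : (Fin 2 → ℝ) → Fin 2 → ℝ) (z : Fin 2 → ℝ) (v : Fin 2 → ℝ) :
    (jac f z).mulVec v = fderiv ℝ f z v := by
  have hv : v = v 0 • (Pi.single 0 1 : Fin 2 → ℝ) + v 1 • (Pi.single 1 1 : Fin 2 → ℝ) := by
    funext i; fin_cases i <;> simp
  funext i
  conv_rhs => rw [hv]
  simp [jac, Matrix.mulVec, dotProduct, Fin.sum_univ_two, Pi.add_apply, mul_comm]

lemma vec_ne_zero_iff (v : Fin 2 → ℝ) (hv : v ≠ 0) : v 0 ^ 2 + v 1 ^ 2 ≠ 0 := by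
  intro h
  apply hv
  funext i
  have h0 : v 0 = 0 := by nlinarith [sq_nonneg (v 0), sq_nonneg (v 1)]
  have h1 : v 1 = 0 := by nlinarith [sq_nonneg (v 0), sq_nonneg (v 1)]
  fin_cases i <;> simp [h0, h1]

/-- Automatic reducibility for exact invariant tori of a conformally symplectic
map `f` with constant factor `λ`: if `f(K(θ)) = K(θ+ω)` for all `θ`, then with
`N(θ) = (DK(θ)ᵀDK(θ))⁻¹`, `V(θ) = J⁻¹ DK(θ) N(θ)` and
`S(θ) = (DK(θ+ω)N(θ+ω))ᵀ Df(K(θ)) J⁻¹ DK(θ)N(θ)`, the derivative of `f` maps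
the frame `M = [DK | V]` to its shift times the triangular matrix
`[[1, S(θ)],[0, λ]]`; componentwise: `Df(K(θ)) DK(θ) = DK(θ+ω)` and
`Df(K(θ)) V(θ) = S(θ) DK(θ+ω) + λ V(θ+ω)`. -/
theorem automatic_reducibility (lam ω : ℝ)
    (f : (Fin 2 → ℝ) → Fin 2 → ℝ) (hf : ContDiff ℝ 1 f)
    (hconf : ∀ z, (jac f z)ᵀ * J2 * jac f z = lam • J2)
    (K : ℝ → Fin 2 → ℝ) (hK : ContDiff ℝ 1 K) (hDK : ∀ θ, deriv K θ ≠ 0)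
    (hinv : ∀ θ, f (K θ) = K (θ + ω))
    (N : ℝ → ℝ) (hN : ∀ θ, N θ = (deriv K θ ⬝ᵥ deriv K θ)⁻¹)
    (V : ℝ → Fin 2 → ℝ) (hV : ∀ θ, V θ = N θ • (J2⁻¹).mulVec (deriv K θ))
    (S : ℝ → ℝ)
    (hS : ∀ θ, S θ = (N (θ + ω) • deriv K (θ + ω)) ⬝ᵥ
      ((jac f (K θ)).mulVec ((J2⁻¹).mulVec (N θ • deriv K θ)))) :
    ∀ θ : ℝ,
      (jac f (K θ)).mulVec (deriv K θ) = deriv K (θ + ω) ∧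
      (jac f (K θ)).mulVec (V θ) = S θ • deriv K (θ + ω) + lam • V (θ + ω) := by
  intro θ
  have hKd : ∀ t, DifferentiableAt ℝ K t := fun t => (hK.differentiable one_ne_zero).differentiableAt
  have hfd : DifferentiableAt ℝ f (K θ) := (hf.differentiable one_ne_zero).differentiableAt
  have hchain : (jac f (K θ)).mulVec (deriv K θ) = deriv K (θ + ω) := by
    rw [jac_mulVec]
    have h1 : (fun t => f (K t)) = fun t => K (t + ω) := funext hinv
    have h2 : deriv (fun t => f (K t)) θ = fderiv ℝ f (K θ) (deriv K θ) := by
      have hc : fderiv ℝ (f ∘ K) θ = (fderiv ℝ f (K θ)).comp (fderiv ℝ K θ) :=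
        fderiv_comp θ hfd (hKd θ)
      calc deriv (fun t => f (K t)) θ = fderiv ℝ (f ∘ K) θ 1 := (fderiv_apply_one_eq_deriv).symm
        _ = fderiv ℝ f (K θ) (fderiv ℝ K θ 1) := by rw [hc]; rfl
        _ = fderiv ℝ f (K θ) (deriv K θ) := by rw [fderiv_apply_one_eq_deriv]
    rw [← h2, h1, deriv_comp_add_const]
  refine ⟨hchain, ?_⟩
  set A := jac f (K θ) with hA
  set u := deriv K θ with hu
  set w := deriv K (θ + ω) with hw
  have hdet : A 0 0 * A 1 1 - A 0 1 * A 1 0 = lam := by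
    have := congrFun (congrFun (hconf (K θ)) 0) 1
    simp [Matrix.mul_apply, Fin.sum_univ_two, J2, Matrix.transpose_apply, ← hA] at this
    linarith
  have hru : w 0 = A 0 0 * u 0 + A 0 1 * u 1 := by
    rw [← hchain]; simp [Matrix.mulVec, dotProduct, Fin.sum_univ_two]
  have hsu : w 1 = A 1 0 * u 0 + A 1 1 * u 1 := by
    rw [← hchain]; simp [Matrix.mulVec, dotProduct, Fin.sum_univ_two]
  have hu0 : u 0 ^ 2 + u 1 ^ 2 ≠ 0 := vec_ne_zero_iff _ (hDK θ)
  have hw0 : w 0 ^ 2 + w 1 ^ 2 ≠ 0 := vec_ne_zero_iff _ (hDK (θ + ω))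
  have hNθ : N θ = (u 0 ^ 2 + u 1 ^ 2)⁻¹ := by
    rw [hN]; simp [dotProduct, Fin.sum_univ_two, sq, hu]
  have hNω : N (θ + ω) = (w 0 ^ 2 + w 1 ^ 2)⁻¹ := by
    rw [hN]; simp [dotProduct, Fin.sum_univ_two, sq, hw]
  have hJu : ∀ v : Fin 2 → ℝ, (J2⁻¹).mulVec v = ![-(v 1), v 0] := by
    intro v; rw [J2_inv]; funext i; fin_cases i <;>
      simp [Matrix.mulVec, dotProduct, Fin.sum_univ_two]
  have hV0 : V θ 0 = N θ * (-(u 1)) := by rw [hV, hJu]; simp [hu]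
  have hV1 : V θ 1 = N θ * u 0 := by rw [hV, hJu]; simp [hu]
  have hW0 : V (θ + ω) 0 = N (θ + ω) * (-(w 1)) := by rw [hV, hJu]; simp [hw]
  have hW1 : V (θ + ω) 1 = N (θ + ω) * w 0 := by rw [hV, hJu]; simp [hw]
  have hSv : S θ = N (θ + ω) * w 0 * (A 0 0 * (N θ * -(u 1)) + A 0 1 * (N θ * u 0))
      + N (θ + ω) * w 1 * (A 1 0 * (N θ * -(u 1)) + A 1 1 * (N θ * u 0)) := by
    rw [hS, hJu]
    simp only [Matrix.mulVec, dotProduct, Fin.sum_univ_two, Pi.smul_apply, smul_eq_mul,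
      Matrix.cons_val_zero, Matrix.cons_val_one, Matrix.head_cons, ← hA, ← hu, ← hw]
    ring
  have hAV : ∀ i, A.mulVec (V θ) i = A i 0 * V θ 0 + A i 1 * V θ 1 := by
    intro i; simp [Matrix.mulVec, dotProduct, Fin.sum_univ_two]
  rw [hru, hsu] at hw0
  funext i
  fin_cases i
  · show A.mulVec (V θ) 0 = (S θ • w + lam • V (θ + ω)) 0
    rw [hAV, Pi.add_apply, Pi.smul_apply, Pi.smul_apply, smul_eq_mul, smul_eq_mul,
      hSv, hV0, hV1, hW0, hNθ, hNω, ← hdet, hru, hsu]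
    generalize hD : (A 0 0 * u 0 + A 0 1 * u 1) ^ 2 + (A 1 0 * u 0 + A 1 1 * u 1) ^ 2 = D at hw0 ⊢
    field_simp
    subst hD
    ring
  · show A.mulVec (V θ) 1 = (S θ • w + lam • V (θ + ω)) 1
    rw [hAV, Pi.add_apply, Pi.smul_apply, Pi.smul_apply, smul_eq_mul, smul_eq_mul,
      hSv, hV0, hV1, hW1, hNθ, hNω, ← hdet, hru, hsu]
    generalize hD : (A 0 0 * u 0 + A 0 1 * u 1) ^ 2 + (A 1 0 * u 0 + A 1 1 * u 1) ^ 2 = D at hw0 ⊢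
    field_simp
    subst hD
    ring
end
end
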